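/- Let T be a tree with vertices α, β, y such that y lies strictly between α and β on the geodesic from α to β. Let G act on T by automorphisms. If g ∈ G fixes α but not y, and δ is a vertex not in the component of T ∖ {y} containing α, then δ^g is not in the component of T ∖ {y} containing β. -/

import Mathlib

open Pointwise

/-- A permutation preserves a directed edge relation. -/
def DPreserves {V : Type*} (E : V → V → Prop) (g : Equiv.Perm V) : Prop :=
  ∀ a b : V, E (g a) (g b) ↔ E a b

/-- The automorphism group of the directed graph with edge relation `E`,
as a subgroup of the symmetric group. -/
def autSub {V : Type*} (E : V → V → Prop) : Subgroup (Equiv.Perm V) where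
  carrier := {g | DPreserves E g}
  one_mem' := fun _ _ => Iff.rfl
  mul_mem' := by
    intro g h hg hh a b
    exact (hg (h a) (h b)).trans (hh a b)
  inv_mem' := by
    intro g hg a b
    simpa using (hg (g⁻¹ a) (g⁻¹ b)).symm

/-- A subgroup of the symmetric group acts primitively: it is transitive and the only
invariant equivalence relations are the trivial and the universal ones. -/
def IsPrimitiveSub {X : Type*} (G : Subgroup (Equiv.Perm X)) : Prop :=
  (∀ a b : X, ∃ g ∈ G, g a = b) ∧
    ∀ r : Setoid X, (∀ g ∈ G, ∀ a b : X, r.r a b ↔ r.r (g a) (g b)) →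
      (∀ a b : X, r.r a b ↔ a = b) ∨ ∀ a b : X, r.r a b

/-- A subgroup of the symmetric group acts regularly: transitively with trivial
point stabilisers. -/
def IsRegularSub {X : Type*} (G : Subgroup (Equiv.Perm X)) : Prop :=
  (∀ a b : X, ∃ g ∈ G, g a = b) ∧ ∀ g ∈ G, ∀ a : X, g a = a → g = 1

/-- `a` is a cut vertex of `Γ`: deleting it disconnects the graph. -/
def IsCutVertexOf {V : Type*} (Γ : SimpleGraph V) (a : V) : Prop :=
  ¬ (Γ.induce {v | v ≠ a}).Preconnected

/-- `Γ` is connected and has connectivity one. -/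
def HasConnOne {V : Type*} (Γ : SimpleGraph V) : Prop :=
  Γ.Connected ∧ ∃ a, IsCutVertexOf Γ a

/-- `B` is (the vertex set of) a block of `Γ`: a connected induced subgraph with no cut
vertex of its own, maximal with these properties. -/
def IsBlockOf {V : Type*} (Γ : SimpleGraph V) (B : Set V) : Prop :=
  (Γ.induce B).Connected ∧ (∀ b ∈ B, (Γ.induce (B \ {b})).Preconnected) ∧
    ∀ C : Set V, B ⊆ C → (Γ.induce C).Connected →
      (∀ c ∈ C, (Γ.induce (C \ {c})).Preconnected) → B = C

/-- Vertex type of the block-cut-vertex tree: cut vertices plus blocks. -/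
def BCVertex {V : Type*} (Γ : SimpleGraph V) : Type _ :=
  {a : V // IsCutVertexOf Γ a} ⊕ {B : Set V // IsBlockOf Γ B}

/-- The block-cut-vertex tree: a cut vertex is adjacent to the blocks containing it. -/
def bcTree {V : Type*} (Γ : SimpleGraph V) : SimpleGraph (BCVertex Γ) :=
  SimpleGraph.fromRel (fun x y =>
    ∃ (a : {a : V // IsCutVertexOf Γ a}) (B : {B : Set V // IsBlockOf Γ B}),
      x = Sum.inl a ∧ y = Sum.inr B ∧ (a : V) ∈ (B : Set V))

/-- The stabiliser (in the full symmetric group) of a vertex of the block-cut-vertex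
tree: the point stabiliser for a cut vertex, the setwise stabiliser for a block. -/
def bcStab {V : Type*} {Γ : SimpleGraph V} (x : BCVertex Γ) : Subgroup (Equiv.Perm V) :=
  match x with
  | Sum.inl a => MulAction.stabilizer (Equiv.Perm V) (a : V)
  | Sum.inr B => MulAction.stabilizer (Equiv.Perm V) (B : Set V)

/-- `z` lies on a geodesic between `a` and `b`. -/
def OnGeodesic {W : Type*} (T : SimpleGraph W) (a b z : W) : Prop :=
  T.dist a z + T.dist z b = T.dist a b

/-- `a` and `b` lie in the same connected component of `T` with the vertex `y` deleted. -/
def SameCompAvoiding {W : Type*} (T : SimpleGraph W) (y a b : W) : Prop :=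
  ∃ (ha : a ≠ y) (hb : b ≠ y), (T.induce {v | v ≠ y}).Reachable ⟨a, ha⟩ ⟨b, hb⟩

/-- `B` and `C` are isomorphic as directed graphs (with edge relation `E`). -/
def BlocksIsomorphic {V : Type*} (E : V → V → Prop) (B C : Set V) : Prop :=
  ∃ e : B ≃ C, ∀ a b : B, E (a : V) (b : V) ↔ E (e a : V) (e b : V)

/-- The automorphism group of the directed graph induced on `B`. -/
def BlockAut {V : Type*} (E : V → V → Prop) (B : Set V) : Subgroup (Equiv.Perm B) :=
  autSub (fun a b : B => E (a : V) (b : V))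

/-- `B` has at least three vertices. -/
def HasThreeVertices {V : Type*} (B : Set V) : Prop :=
  ∃ x y z : V, x ∈ B ∧ y ∈ B ∧ z ∈ B ∧ x ≠ y ∧ x ≠ z ∧ y ≠ z

/-- Primitivity for an abstract group action: transitivity, and the only invariant
equivalence relations are the trivial and the universal ones. -/
def IsPrimAction (G Ω : Type*) [Group G] [MulAction G Ω] : Prop :=
  MulAction.IsPretransitive G Ω ∧
    ∀ r : Setoid Ω, (∀ (g : G) (a b : Ω), r.r a b ↔ r.r (g • a) (g • b)) →
      (∀ a b : Ω, r.r a b ↔ a = b) ∨ ∀ a b : Ω, r.r a b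



namespace Stmt4Aux
open SimpleGraph
variable {W : Type*} {T : SimpleGraph W}

lemma reach_of_walk {y a b : W} (ha : a ≠ y) (hb : b ≠ y)
    (w : T.Walk a b) (hw : ∀ v ∈ w.support, v ≠ y) :
    (T.induce {v | v ≠ y}).Reachable ⟨a, ha⟩ ⟨b, hb⟩ := by
  induction w with
  | nil => rfl
  | @cons u v c hadj p ih =>
    have hv : v ≠ y := hw v (by simp)
    refine SimpleGraph.Reachable.trans ?_ (ih hv hb (fun x hx => hw x (by simp [hx])))
    exact SimpleGraph.Adj.reachable (by exact hadj)

lemma walk_of_reach {y a b : W} (ha : a ≠ y) (hb : b ≠ y)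
    (h : (T.induce {v | v ≠ y}).Reachable ⟨a, ha⟩ ⟨b, hb⟩) :
    ∃ w : T.Walk a b, ∀ v ∈ w.support, v ≠ y := by
  obtain ⟨p⟩ := h
  let e : T.induce {v | v ≠ y} ↪g T := SimpleGraph.Embedding.induce _
  refine ⟨p.map e.toHom, ?_⟩
  intro v hv
  replace hv : v ∈ (p.map e.toHom).support := hv
  rw [SimpleGraph.Walk.support_map] at hv
  obtain ⟨⟨x, hx⟩, -, rfl⟩ := List.mem_map.mp hv
  exact hx

lemma iso_dist (g : T ≃g T) (u v : W) : T.dist (g u) (g v) = T.dist u v := by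
  have key : ∀ (g : T ≃g T) (u v : W), T.dist (g u) (g v) ≤ T.dist u v := by
    intro g u v
    by_cases hr : T.Reachable u v
    · obtain ⟨p, hp⟩ := hr.exists_walk_length_eq_dist
      calc T.dist (g u) (g v) ≤ (p.map g.toHom).length := dist_le _
        _ = T.dist u v := by rw [Walk.length_map, hp]
    · simp [SimpleGraph.dist_eq_zero_iff_eq_or_not_reachable.mpr
        (Or.inr (fun h => hr ((SimpleGraph.Iso.reachable_iff (φ := g)).mp h)))]
  refine le_antisymm (key g u v) ?_
  have := key g.symm (g u) (g v)
  simpa using this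

lemma mem_support_of_onGeo (hT : T.IsTree) {a b y : W}
    (h : T.dist a y + T.dist y b = T.dist a b) (w : T.Walk a b) : y ∈ w.support := by
  classical
  obtain ⟨p1, hp1⟩ := (hT.isConnected a y).exists_walk_length_eq_dist
  obtain ⟨p2, hp2⟩ := (hT.isConnected y b).exists_walk_length_eq_dist
  have hlen : (p1.append p2).length = T.dist a b := by
    rw [Walk.length_append, hp1, hp2, h]
  have hpath : (p1.append p2).IsPath := Walk.isPath_of_length_eq_dist _ hlen
  have huniq := hT.IsAcyclic.path_unique ⟨w.bypass, w.bypass_isPath⟩ ⟨p1.append p2, hpath⟩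
  have hy : y ∈ w.bypass.support := by
    rw [Subtype.ext_iff] at huniq
    simp only at huniq
    rw [huniq, Walk.mem_support_append_iff]
    exact Or.inl p1.end_mem_support
  exact w.support_bypass_subset hy

lemma not_same_of_onGeo (hT : T.IsTree) {a b y : W}
    (h : T.dist a y + T.dist y b = T.dist a b) : ¬ SameCompAvoiding T y a b := by
  rintro ⟨ha', hb', hr⟩
  obtain ⟨w, hw⟩ := walk_of_reach ha' hb' hr
  exact hw y (mem_support_of_onGeo hT h w) rfl

lemma onGeo_of_not_same (hT : T.IsTree) {a b y : W} (ha : a ≠ y) (hb : b ≠ y)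
    (h : ¬ SameCompAvoiding T y a b) : T.dist a y + T.dist y b = T.dist a b := by
  classical
  obtain ⟨p, hp⟩ := (hT.isConnected a b).exists_walk_length_eq_dist
  have hy : y ∈ p.support := by
    by_contra hy
    exact h ⟨ha, hb, reach_of_walk ha hb p (fun v hv hvy => hy (hvy ▸ hv))⟩
  have h1 : T.dist a y ≤ (p.takeUntil y hy).length := dist_le _
  have h2 : T.dist y b ≤ (p.dropUntil y hy).length := dist_le _
  have h3 : (p.takeUntil y hy).length + (p.dropUntil y hy).length = T.dist a b := by
    rw [← Walk.length_append, p.take_spec hy, hp]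
  have h4 := hT.isConnected.dist_triangle (u := a) (v := y) (w := b)
  omega

lemma eq_of_onGeo_of_dist_eq (hT : T.IsTree) {a b y y' : W}
    (h : T.dist a y + T.dist y b = T.dist a b)
    (h' : T.dist a y' + T.dist y' b = T.dist a b)
    (hd : T.dist a y = T.dist a y') : y = y' := by
  classical
  obtain ⟨p, hp⟩ := (hT.isConnected a b).exists_walk_length_eq_dist
  have key : ∀ z : W, T.dist a z + T.dist z b = T.dist a b →
      p.getVert (T.dist a z) = z := by
    intro z hz
    have hzs : z ∈ p.support := mem_support_of_onGeo hT hz p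
    have h1 : T.dist a z ≤ (p.takeUntil z hzs).length := dist_le _
    have h2 : T.dist z b ≤ (p.dropUntil z hzs).length := dist_le _
    have h3 : (p.takeUntil z hzs).length + (p.dropUntil z hzs).length = T.dist a b := by
      rw [← Walk.length_append, p.take_spec hzs, hp]
    have hlen : (p.takeUntil z hzs).length = T.dist a z := by omega
    conv_lhs => rw [← p.take_spec hzs]
    rw [Walk.getVert_append, hlen]
    simp
  have := key y h
  rw [hd] at this
  rw [← this, key y' h']

end Stmt4Aux

/-- In a tree, with `y` strictly between `α` and `β`, if `g` fixes `α` but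
not `y` and `δ` is not in the component of `T ∖ {y}` containing `α`, then `g δ` is not in
the component of `T ∖ {y}` containing `β`. -/
theorem stmt4 {W : Type*} (T : SimpleGraph W) (hT : T.IsTree)
    (g : T ≃g T) (α β y δ : W)
    (hyα : y ≠ α) (hyβ : y ≠ β) (hgeo : OnGeodesic T α β y)
    (hα : g α = α) (hy : g y ≠ y)
    (hδ : ¬ SameCompAvoiding T y α δ) :
    ¬ SameCompAvoiding T y β (g δ) := by
  intro hcontra
  obtain ⟨hβy, hgδy, hrβ⟩ := hcontra
  have hαy : α ≠ y := hyα.symm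
  -- g δ is not in the same component as α
  have hnαgδ : ¬ SameCompAvoiding T y α (g δ) := by
    rintro ⟨hαy', hgδy', hrα⟩
    exact Stmt4Aux.not_same_of_onGeo hT hgeo ⟨hαy, hβy, hrα.trans hrβ.symm⟩
  have hgoal : T.dist α y + T.dist y (g δ) = T.dist α (g δ) :=
    Stmt4Aux.onGeo_of_not_same hT hαy hgδy hnαgδ
  by_cases hδy : δ = y
  · -- then g δ = g y and dist α (g y) = dist α y, so dist y (g y) = 0
    subst hδy
    have h1 : T.dist α (g δ) = T.dist α δ := by
      conv_lhs => rw [← hα]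
      exact Stmt4Aux.iso_dist g α δ
    have h0 : T.dist δ (g δ) = 0 := by omega
    have := (hT.isConnected.dist_eq_zero_iff (u := δ) (v := g δ)).mp h0
    exact hy this.symm
  · -- δ ≠ y : y lies on the geodesic from α to δ, transport by g
    have hδgeo : T.dist α y + T.dist y δ = T.dist α δ :=
      Stmt4Aux.onGeo_of_not_same hT hαy hδy hδ
    have h2 : T.dist α (g y) + T.dist (g y) (g δ) = T.dist α (g δ) := by
      conv_lhs => rw [← hα]
      conv_rhs => rw [← hα]
      rw [Stmt4Aux.iso_dist g α y, Stmt4Aux.iso_dist g y δ, Stmt4Aux.iso_dist g α δ]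
      exact hδgeo
    have hd : T.dist α (g y) = T.dist α y := by
      conv_lhs => rw [← hα]
      exact Stmt4Aux.iso_dist g α y
    exact hy (Stmt4Aux.eq_of_onGeo_of_dist_eq hT h2 hgoal hd)
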